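/- For every m ≥ 1 and every integer j with 0 < j, the binomial coefficient C(2^m - 1 - j, j) is even. -/
import Mathlib

/-- For every `m ≥ 1` and `j > 0`, the binomial coefficient `C(2^m - 1 - j, j)` is even. -/
theorem stmt6 (m j : ℕ) (hm : 1 ≤ m) (hj : 0 < j) :
    Even (Nat.choose (2 ^ m - 1 - j) j) := by
  haveI : Fact (Nat.Prime 2) := ⟨Nat.prime_two⟩
  induction m generalizing j with
  | zero => omega
  | succ m ih =>
    set n := 2 ^ (m + 1) - 1 - j with hn
    rcases lt_or_ge n j with h | h
    · rw [Nat.choose_eq_zero_of_lt h]; exact Even.zero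
    have key : Nat.choose n j ≡ Nat.choose (n % 2) (j % 2) * Nat.choose (n / 2) (j / 2) [MOD 2] :=
      Choose.choose_modEq_choose_mod_mul_choose_div_nat (p := 2)
    have hp : 2 ^ (m + 1) = 2 * 2 ^ m := by ring
    rw [Nat.even_iff]
    rcases Nat.even_or_odd j with hje | hjo
    · -- j even, j ≥ 2, recurse
      have hj2 : j % 2 = 0 := Nat.even_iff.mp hje
      have hn2 : n % 2 = 1 := by omega
      have hm1 : 1 ≤ m := by
        by_contra hc
        interval_cases m <;> omega
      have hdiv : n / 2 = 2 ^ m - 1 - j / 2 := by omega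
      have : Nat.choose (2 ^ m - 1 - j / 2) (j / 2) % 2 = 0 := by
        rw [← Nat.even_iff]; exact ih (j / 2) hm1 (by omega)
      calc Nat.choose n j % 2
          = (Nat.choose (n % 2) (j % 2) * Nat.choose (n / 2) (j / 2)) % 2 := key
        _ = 0 := by rw [hj2, hn2, hdiv, Nat.mul_mod, this]; simp
    · -- j odd, n even, choose 0 1 = 0
      have hj2 : j % 2 = 1 := Nat.odd_iff.mp hjo
      have hn2 : n % 2 = 0 := by omega
      calc Nat.choose n j % 2
          = (Nat.choose (n % 2) (j % 2) * Nat.choose (n / 2) (j / 2)) % 2 := key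
        _ = 0 := by rw [hj2, hn2]; simp
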